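/- If a topological space X is super-refinable, then in every degree n its Čech homology Ȟ_n(X,ℤ) is isomorphic to its discrete homology 𝓗_n(X). -/

import Mathlib

set_option linter.unusedSectionVars false

/-- Discrete chains with `m` vertices: the free `ℤ`-module on ordered `m`-tuples of points. -/
abbrev DChain (α : Type*) (m : ℕ) := (Fin m → α) →₀ ℤ

/-- The `i`-th face operator on discrete chains, deleting the `i`-th vertex. -/
noncomputable def dface {α : Type*} {m : ℕ} (i : Fin (m + 1)) :
    DChain α (m + 1) →ₗ[ℤ] DChain α m :=
  Finsupp.lmapDomain ℤ ℤ (fun σ => σ ∘ i.succAbove)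

/-- The simplicial boundary operator on discrete chains:
`∂[x₀,…,xₙ] = ∑ i, (-1)^i [x₀,…,x̂ᵢ,…,xₙ]`. -/
noncomputable def dbd {α : Type*} {m : ℕ} : DChain α (m + 1) →ₗ[ℤ] DChain α m :=
  ∑ i : Fin (m + 1), ((-1 : ℤ) ^ (i : ℕ)) • dface i

/-- The chain map induced by a map on vertices. -/
noncomputable def vmap {α β : Type*} (f : α → β) {m : ℕ} : DChain α m →ₗ[ℤ] DChain β m :=
  Finsupp.lmapDomain ℤ ℤ (fun σ => f ∘ σ)

/-- The support of a discrete chain: the set of vertices appearing in its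
cancellation-free expression. -/
def chainSupp {α : Type*} {m : ℕ} (c : DChain α m) : Set α :=
  ⋃ σ ∈ c.support, Set.range σ

/-- An open cover of a topological space. -/
def IsOpenCover {X : Type*} [TopologicalSpace X] (O : Set (Set X)) : Prop :=
  (∀ U ∈ O, IsOpen U) ∧ ⋃₀ O = Set.univ

/-- `O'` refines `O`: every element of `O'` is contained in some element of `O`. -/
def Refines {X : Type*} (O' O : Set (Set X)) : Prop :=
  ∀ U ∈ O', ∃ V ∈ O, U ⊆ V

/-- `O'` is a super-refinement of `O` (written `O' ≪ O`) if every point `x` has a *parent*: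
an element of `O` containing every member of `O'` that contains `x`. -/
def SuperRefines {X : Type*} (O' O : Set (Set X)) : Prop :=
  ∀ x : X, ∃ U ∈ O, ∀ V ∈ O', x ∈ V → V ⊆ U

/-- A subset is `O`-tiny if it is contained in a single element of `O`. -/
def Tiny {X : Type*} (O : Set (Set X)) (A : Set X) : Prop :=
  ∃ U ∈ O, A ⊆ U

/-- A discrete chain is `O`-fine if each of its simplices is `O`-tiny. -/
def FineChain {X : Type*} (O : Set (Set X)) {m : ℕ} (c : DChain X m) : Prop :=
  ∀ σ ∈ c.support, Tiny O (Set.range σ)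

/-- A chain of tuples of sets is a nerve chain of the cover `O` if each of its simplices is a
tuple of elements of `O` with nonempty intersection. -/
def NerveChain {X : Type*} (O : Set (Set X)) {m : ℕ} (c : DChain (Set X) m) : Prop :=
  ∀ τ ∈ c.support, (∀ i, τ i ∈ O) ∧ (⋂ i, τ i).Nonempty

section Lemmas

variable {α β : Type*} {X : Type*}

lemma nerveChain_zero {X : Type*} (O : Set (Set X)) {m : ℕ} :
    NerveChain O (0 : DChain (Set X) m) := by
  intro τ hτ
  simp at hτ

lemma nerveChain_add {X : Type*} (O : Set (Set X)) {m : ℕ} {c d : DChain (Set X) m}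
    (hc : NerveChain O c) (hd : NerveChain O d) : NerveChain O (c + d) := by
  classical
  intro τ hτ
  rcases Finset.mem_union.1 (Finsupp.support_add hτ) with h | h
  · exact hc τ h
  · exact hd τ h

lemma nerveChain_neg {X : Type*} (O : Set (Set X)) {m : ℕ} {c : DChain (Set X) m}
    (hc : NerveChain O c) : NerveChain O (-c) := by
  intro τ hτ
  rw [Finsupp.support_neg] at hτ
  exact hc τ hτ

lemma vmap_face (f : α → β) {m : ℕ} (i : Fin (m + 1)) (c : DChain α (m + 1)) :
    dface i (vmap f c) = vmap f (dface i c) := by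
  simp only [dface, vmap, Finsupp.lmapDomain_apply]
  rw [← Finsupp.mapDomain_comp, ← Finsupp.mapDomain_comp]
  rfl

lemma dbd_vmap (f : α → β) {m : ℕ} (c : DChain α (m + 1)) :
    dbd (vmap f c) = vmap f (dbd c) := by
  simp only [dbd, LinearMap.sum_apply, LinearMap.smul_apply, map_sum, map_smul]
  exact Finset.sum_congr rfl fun i _ => congrArg _ (vmap_face f i c)

lemma nerveChain_vmap {X : Type*} {O' O : Set (Set X)} {f : Set X → Set X}
    (hf : ∀ U ∈ O', U ⊆ f U ∧ f U ∈ O) {m : ℕ} {c : DChain (Set X) m}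
    (hc : NerveChain O' c) : NerveChain O (vmap f c) := by
  classical
  intro τ hτ
  have hsub := Finsupp.mapDomain_support (f := fun σ : Fin m → Set X => f ∘ σ) hτ
  obtain ⟨σ, hσ, rfl⟩ := Finset.mem_image.1 hsub
  obtain ⟨hσO, x, hx⟩ := hc σ hσ
  refine ⟨fun i => (hf (σ i) (hσO i)).2, x, ?_⟩
  rw [Set.mem_iInter] at hx ⊢
  exact fun i => (hf (σ i) (hσO i)).1 (hx i)

end Lemmas

section CechHomology

variable (X : Type*) [TopologicalSpace X]

/-- The type of open covers of `X`. -/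
def Cov := {O : Set (Set X) // IsOpenCover O}

variable {X}

/-- The subgroup of degree-`n` cycles in the nerve chain complex of the cover `O`
(`NerveChain O c`, and `dbd c = 0` unless `n = 0`, where every `0`-chain is a cycle). -/
noncomputable def nerveCyc (O : Set (Set X)) (n : ℕ) : AddSubgroup (DChain (Set X) (n + 1)) where
  carrier := {c | NerveChain O c ∧ (n = 0 ∨ dbd c = 0)}
  add_mem' := by
    rintro a b ⟨ha, ha'⟩ ⟨hb, hb'⟩
    refine ⟨nerveChain_add O ha hb, ?_⟩
    rcases ha' with h | ha'
    · exact Or.inl h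
    · rcases hb' with h | hb'
      · exact Or.inl h
      · exact Or.inr (by rw [map_add, ha', hb', add_zero])
  zero_mem' := ⟨nerveChain_zero O, Or.inr (map_zero _)⟩
  neg_mem' := by
    rintro a ⟨ha, ha'⟩
    refine ⟨nerveChain_neg O ha, ?_⟩
    rcases ha' with h | ha'
    · exact Or.inl h
    · exact Or.inr (by rw [map_neg, ha', neg_zero])

/-- The subgroup of degree-`n` boundaries of nerve chains of the cover `O`. -/
noncomputable def nerveBd (O : Set (Set X)) (n : ℕ) : AddSubgroup (DChain (Set X) (n + 1)) where
  carrier := {c | ∃ d : DChain (Set X) (n + 2), NerveChain O d ∧ dbd d = c}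
  add_mem' := by
    rintro a b ⟨d₁, h₁, rfl⟩ ⟨d₂, h₂, rfl⟩
    exact ⟨d₁ + d₂, nerveChain_add O h₁ h₂, map_add _ _ _⟩
  zero_mem' := ⟨0, nerveChain_zero O, map_zero _⟩
  neg_mem' := by
    rintro a ⟨d, h, rfl⟩
    exact ⟨-d, nerveChain_neg O h, map_neg _ _⟩

/-- The degree-`n` simplicial homology of the nerve of the cover `O`:
cycles modulo boundaries. -/
abbrev nerveH (O : Set (Set X)) (n : ℕ) :=
  nerveCyc O n ⧸ (nerveBd O n).addSubgroupOf (nerveCyc O n)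

/-- A spouse map for a refinement `O' < O`. -/
def IsSpouse (O' O : Set (Set X)) (f : Set X → Set X) : Prop :=
  ∀ U ∈ O', U ⊆ f U ∧ f U ∈ O

/-- Compatibility of homology classes under the transition maps of the Čech inverse system:
`x' ∈ H_n(N(O'))` is sent to `x ∈ H_n(N(O))`, expressed at the level of representing cycles
via (all) spouse maps. -/
def HCompat {O' O : Set (Set X)} {n : ℕ} (x' : nerveH O' n) (x : nerveH O n) : Prop :=
  ∀ (c' : nerveCyc O' n) (c : nerveCyc O n) (f : Set X → Set X), IsSpouse O' O f →
    (QuotientAddGroup.mk c' = x') → (QuotientAddGroup.mk c = x) →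
    vmap f (c' : DChain (Set X) (n + 1)) - (c : DChain (Set X) (n + 1)) ∈ nerveBd O n

end CechHomology

section Limit

variable {X : Type*} [TopologicalSpace X]

lemma nerveBd_vmap {O' O : Set (Set X)} {f : Set X → Set X} (hf : IsSpouse O' O f)
    {n : ℕ} {a : DChain (Set X) (n + 1)} (ha : a ∈ nerveBd O' n) :
    vmap f a ∈ nerveBd O n := by
  obtain ⟨d, hd, rfl⟩ := ha
  exact ⟨vmap f d, nerveChain_vmap hf hd, dbd_vmap f d⟩

/-- The Čech homology group `Ȟ_n(X,ℤ)`: the inverse limit, over the directed set of open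
covers of `X` ordered by refinement, of the homology groups of the nerves, realised as the
subgroup of compatible families inside the product. -/
noncomputable def cechHomology (X : Type*) [TopologicalSpace X] (n : ℕ) :
    AddSubgroup (∀ O : Cov X, nerveH O.1 n) where
  carrier := {s | ∀ O' O : Cov X, Refines O'.1 O.1 → HCompat (s O') (s O)}
  zero_mem' := by
    intro O' O href c' c f hf hc' hc
    have hc'amb : (c' : DChain (Set X) (n + 1)) ∈ nerveBd O'.1 n :=
      (AddSubgroup.mem_addSubgroupOf).mp (QuotientAddGroup.eq_zero_iff c' |>.mp hc')
    have hcamb : (c : DChain (Set X) (n + 1)) ∈ nerveBd O.1 n :=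
      (AddSubgroup.mem_addSubgroupOf).mp (QuotientAddGroup.eq_zero_iff c |>.mp hc)
    exact sub_mem (nerveBd_vmap hf hc'amb) hcamb
  add_mem' := by
    intro s t hs ht O' O href c' c f hf hc' hc
    obtain ⟨a', ha'⟩ := QuotientAddGroup.mk_surjective (s O')
    obtain ⟨b', hb'⟩ := QuotientAddGroup.mk_surjective (t O')
    obtain ⟨a, ha⟩ := QuotientAddGroup.mk_surjective (s O)
    obtain ⟨b, hb⟩ := QuotientAddGroup.mk_surjective (t O)
    have hw' : (-(a' + b') + c' : nerveCyc O'.1 n) ∈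
        (nerveBd O'.1 n).addSubgroupOf (nerveCyc O'.1 n) := by
      apply QuotientAddGroup.eq.mp
      show QuotientAddGroup.mk (a' + b') = QuotientAddGroup.mk c'
      rw [hc']
      show _ = s O' + t O'
      rw [← ha', ← hb']
      rfl
    have hw : (-(a + b) + c : nerveCyc O.1 n) ∈
        (nerveBd O.1 n).addSubgroupOf (nerveCyc O.1 n) := by
      apply QuotientAddGroup.eq.mp
      show QuotientAddGroup.mk (a + b) = QuotientAddGroup.mk c
      rw [hc]
      show _ = s O + t O
      rw [← ha, ← hb]
      rfl
    have hw'amb := (AddSubgroup.mem_addSubgroupOf).mp hw'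
    have hwamb := (AddSubgroup.mem_addSubgroupOf).mp hw
    have hsa := hs O' O href a' a f hf ha' ha
    have htb := ht O' O href b' b f hf hb' hb
    have key : vmap f (c' : DChain (Set X) (n + 1)) - (c : DChain (Set X) (n + 1)) =
        ((vmap f (a' : DChain (Set X) (n + 1)) - (a : DChain (Set X) (n + 1)))
          + (vmap f (b' : DChain (Set X) (n + 1)) - (b : DChain (Set X) (n + 1)))
          + vmap f ((-(a' + b') + c' : nerveCyc O'.1 n) : DChain (Set X) (n + 1)))
          - ((-(a + b) + c : nerveCyc O.1 n) : DChain (Set X) (n + 1)) := by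
      push_cast
      simp only [map_add, map_neg]
      abel
    rw [key]
    exact sub_mem (add_mem (add_mem hsa htb) (nerveBd_vmap hf hw'amb)) hwamb
  neg_mem' := by
    intro s hs O' O href c' c f hf hc' hc
    obtain ⟨a', ha'⟩ := QuotientAddGroup.mk_surjective (s O')
    obtain ⟨a, ha⟩ := QuotientAddGroup.mk_surjective (s O)
    have hw' : (a' + c' : nerveCyc O'.1 n) ∈
        (nerveBd O'.1 n).addSubgroupOf (nerveCyc O'.1 n) := by
      have : -(-a') + c' ∈ (nerveBd O'.1 n).addSubgroupOf (nerveCyc O'.1 n) := by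
        apply QuotientAddGroup.eq.mp
        show QuotientAddGroup.mk (-a') = QuotientAddGroup.mk c'
        rw [hc']
        show _ = -(s O')
        rw [← ha']
        rfl
      simpa using this
    have hw : (a + c : nerveCyc O.1 n) ∈
        (nerveBd O.1 n).addSubgroupOf (nerveCyc O.1 n) := by
      have : -(-a) + c ∈ (nerveBd O.1 n).addSubgroupOf (nerveCyc O.1 n) := by
        apply QuotientAddGroup.eq.mp
        show QuotientAddGroup.mk (-a) = QuotientAddGroup.mk c
        rw [hc]
        show _ = -(s O)
        rw [← ha]
        rfl
      simpa using this
    have hw'amb := (AddSubgroup.mem_addSubgroupOf).mp hw'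
    have hwamb := (AddSubgroup.mem_addSubgroupOf).mp hw
    have hsa := hs O' O href a' a f hf ha' ha
    have key : vmap f (c' : DChain (Set X) (n + 1)) - (c : DChain (Set X) (n + 1)) =
        (-(vmap f (a' : DChain (Set X) (n + 1)) - (a : DChain (Set X) (n + 1)))
          + vmap f ((a' + c' : nerveCyc O'.1 n) : DChain (Set X) (n + 1)))
          - ((a + c : nerveCyc O.1 n) : DChain (Set X) (n + 1)) := by
      push_cast
      simp only [map_add, map_neg]
      abel
    rw [key]
    exact sub_mem (add_mem (neg_mem hsa) (nerveBd_vmap hf hw'amb)) hwamb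

end Limit

section Discrete

variable {X : Type*} [TopologicalSpace X]

lemma fineChain_zero (O : Set (Set X)) {m : ℕ} : FineChain O (0 : DChain X m) := by
  intro σ hσ
  simp at hσ

lemma fineChain_add (O : Set (Set X)) {m : ℕ} {c d : DChain X m}
    (hc : FineChain O c) (hd : FineChain O d) : FineChain O (c + d) := by
  classical
  intro σ hσ
  rcases Finset.mem_union.1 (Finsupp.support_add hσ) with h | h
  · exact hc σ h
  · exact hd σ h

lemma fineChain_neg (O : Set (Set X)) {m : ℕ} {c : DChain X m}
    (hc : FineChain O c) : FineChain O (-c) := by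
  intro σ hσ
  rw [Finsupp.support_neg] at hσ
  exact hc σ hσ

lemma fineChain_mono {O' O : Set (Set X)} (href : Refines O' O) {m : ℕ} {c : DChain X m}
    (hc : FineChain O' c) : FineChain O c := by
  intro σ hσ
  obtain ⟨U, hU, hsub⟩ := hc σ hσ
  obtain ⟨V, hV, hUV⟩ := href U hU
  exact ⟨V, hV, hsub.trans hUV⟩

/-- The subgroup of degree-`n` cycles in the complex `𝒞_*(X,O)` of `O`-fine discrete chains
(`FineChain O c`, and `dbd c = 0` unless `n = 0`, where every `0`-chain is a cycle). -/
noncomputable def fineCyc (O : Set (Set X)) (n : ℕ) : AddSubgroup (DChain X (n + 1)) where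
  carrier := {c | FineChain O c ∧ (n = 0 ∨ dbd c = 0)}
  add_mem' := by
    rintro a b ⟨ha, ha'⟩ ⟨hb, hb'⟩
    refine ⟨fineChain_add O ha hb, ?_⟩
    rcases ha' with h | ha'
    · exact Or.inl h
    · rcases hb' with h | hb'
      · exact Or.inl h
      · exact Or.inr (by rw [map_add, ha', hb', add_zero])
  zero_mem' := ⟨fineChain_zero O, Or.inr (map_zero _)⟩
  neg_mem' := by
    rintro a ⟨ha, ha'⟩
    refine ⟨fineChain_neg O ha, ?_⟩
    rcases ha' with h | ha'
    · exact Or.inl h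
    · exact Or.inr (by rw [map_neg, ha', neg_zero])

/-- The subgroup of degree-`n` boundaries of `O`-fine discrete chains. -/
noncomputable def fineBd (O : Set (Set X)) (n : ℕ) : AddSubgroup (DChain X (n + 1)) where
  carrier := {c | ∃ d : DChain X (n + 2), FineChain O d ∧ dbd d = c}
  add_mem' := by
    rintro a b ⟨d₁, h₁, rfl⟩ ⟨d₂, h₂, rfl⟩
    exact ⟨d₁ + d₂, fineChain_add O h₁ h₂, map_add _ _ _⟩
  zero_mem' := ⟨0, fineChain_zero O, map_zero _⟩
  neg_mem' := by
    rintro a ⟨d, h, rfl⟩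
    exact ⟨-d, fineChain_neg O h, map_neg _ _⟩

lemma fineBd_mono {O' O : Set (Set X)} (href : Refines O' O) {n : ℕ}
    {a : DChain X (n + 1)} (ha : a ∈ fineBd O' n) : a ∈ fineBd O n := by
  obtain ⟨d, hd, rfl⟩ := ha
  exact ⟨d, fineChain_mono href hd, rfl⟩

/-- The degree-`n` homology `𝓗_n(X,O)` of the complex of `O`-fine discrete chains. -/
abbrev discH (O : Set (Set X)) (n : ℕ) :=
  fineCyc O n ⧸ (fineBd O n).addSubgroupOf (fineCyc O n)

/-- Compatibility of discrete homology classes under the transition maps (induced by the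
inclusions `𝒞_*(X,O') ⊆ 𝒞_*(X,O)` for `O' < O`), at the level of representing cycles. -/
def DCompat {O' O : Set (Set X)} {n : ℕ} (x' : discH O' n) (x : discH O n) : Prop :=
  ∀ (c' : fineCyc O' n) (c : fineCyc O n),
    QuotientAddGroup.mk c' = x' → QuotientAddGroup.mk c = x →
    (c' : DChain X (n + 1)) - (c : DChain X (n + 1)) ∈ fineBd O n

/-- The discrete homology group `𝓗_n(X)`: the inverse limit, over the directed set of open
covers of `X` ordered by refinement, of the groups `𝓗_n(X,O)`, realised as the subgroup of
compatible families inside the product. -/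
noncomputable def discreteHomology (X : Type*) [TopologicalSpace X] (n : ℕ) :
    AddSubgroup (∀ O : Cov X, discH O.1 n) where
  carrier := {s | ∀ O' O : Cov X, Refines O'.1 O.1 → DCompat (s O') (s O)}
  zero_mem' := by
    intro O' O href c' c hc' hc
    have hc'amb : (c' : DChain X (n + 1)) ∈ fineBd O'.1 n :=
      (AddSubgroup.mem_addSubgroupOf).mp (QuotientAddGroup.eq_zero_iff c' |>.mp hc')
    have hcamb : (c : DChain X (n + 1)) ∈ fineBd O.1 n :=
      (AddSubgroup.mem_addSubgroupOf).mp (QuotientAddGroup.eq_zero_iff c |>.mp hc)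
    exact sub_mem (fineBd_mono href hc'amb) hcamb
  add_mem' := by
    intro s t hs ht O' O href c' c hc' hc
    obtain ⟨a', ha'⟩ := QuotientAddGroup.mk_surjective (s O')
    obtain ⟨b', hb'⟩ := QuotientAddGroup.mk_surjective (t O')
    obtain ⟨a, ha⟩ := QuotientAddGroup.mk_surjective (s O)
    obtain ⟨b, hb⟩ := QuotientAddGroup.mk_surjective (t O)
    have hw' : (-(a' + b') + c' : fineCyc O'.1 n) ∈
        (fineBd O'.1 n).addSubgroupOf (fineCyc O'.1 n) := by
      apply QuotientAddGroup.eq.mp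
      show QuotientAddGroup.mk (a' + b') = QuotientAddGroup.mk c'
      rw [hc']
      show _ = s O' + t O'
      rw [← ha', ← hb']
      rfl
    have hw : (-(a + b) + c : fineCyc O.1 n) ∈
        (fineBd O.1 n).addSubgroupOf (fineCyc O.1 n) := by
      apply QuotientAddGroup.eq.mp
      show QuotientAddGroup.mk (a + b) = QuotientAddGroup.mk c
      rw [hc]
      show _ = s O + t O
      rw [← ha, ← hb]
      rfl
    have hw'amb := fineBd_mono href ((AddSubgroup.mem_addSubgroupOf).mp hw')
    have hwamb := (AddSubgroup.mem_addSubgroupOf).mp hw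
    have hsa := hs O' O href a' a ha' ha
    have htb := ht O' O href b' b hb' hb
    have key : (c' : DChain X (n + 1)) - (c : DChain X (n + 1)) =
        (((a' : DChain X (n + 1)) - (a : DChain X (n + 1)))
          + ((b' : DChain X (n + 1)) - (b : DChain X (n + 1)))
          + ((-(a' + b') + c' : fineCyc O'.1 n) : DChain X (n + 1)))
          - ((-(a + b) + c : fineCyc O.1 n) : DChain X (n + 1)) := by
      push_cast
      abel
    rw [key]
    exact sub_mem (add_mem (add_mem hsa htb) hw'amb) hwamb
  neg_mem' := by
    intro s hs O' O href c' c hc' hc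
    obtain ⟨a', ha'⟩ := QuotientAddGroup.mk_surjective (s O')
    obtain ⟨a, ha⟩ := QuotientAddGroup.mk_surjective (s O)
    have hw' : (a' + c' : fineCyc O'.1 n) ∈
        (fineBd O'.1 n).addSubgroupOf (fineCyc O'.1 n) := by
      have : -(-a') + c' ∈ (fineBd O'.1 n).addSubgroupOf (fineCyc O'.1 n) := by
        apply QuotientAddGroup.eq.mp
        show QuotientAddGroup.mk (-a') = QuotientAddGroup.mk c'
        rw [hc']
        show _ = -(s O')
        rw [← ha']
        rfl
      simpa using this
    have hw : (a + c : fineCyc O.1 n) ∈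
        (fineBd O.1 n).addSubgroupOf (fineCyc O.1 n) := by
      have : -(-a) + c ∈ (fineBd O.1 n).addSubgroupOf (fineCyc O.1 n) := by
        apply QuotientAddGroup.eq.mp
        show QuotientAddGroup.mk (-a) = QuotientAddGroup.mk c
        rw [hc]
        show _ = -(s O)
        rw [← ha]
        rfl
      simpa using this
    have hw'amb := fineBd_mono href ((AddSubgroup.mem_addSubgroupOf).mp hw')
    have hwamb := (AddSubgroup.mem_addSubgroupOf).mp hw
    have hsa := hs O' O href a' a ha' ha
    have key : (c' : DChain X (n + 1)) - (c : DChain X (n + 1)) =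
        (-((a' : DChain X (n + 1)) - (a : DChain X (n + 1)))
          + ((a' + c' : fineCyc O'.1 n) : DChain X (n + 1)))
          - ((a + c : fineCyc O.1 n) : DChain X (n + 1)) := by
      push_cast
      abel
    rw [key]
    exact sub_mem (add_mem (neg_mem hsa) hw'amb) hwamb

end Discrete

/-- `X` is super-refinable: every open cover admits a super-refinement. -/
def SuperRefinable (X : Type*) [TopologicalSpace X] : Prop :=
  ∀ O : Set (Set X), IsOpenCover O → ∃ O' : Set (Set X), IsOpenCover O' ∧ SuperRefines O' O

section PrismMachine

variable {α β : Type*}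

/-- Prepend a vertex to every simplex of a chain. -/
noncomputable def vcons (a : α) {m : ℕ} : DChain α m →ₗ[ℤ] DChain α (m + 1) :=
  Finsupp.lmapDomain ℤ ℤ (fun τ : Fin m → α => (Fin.cons a τ : Fin (m + 1) → α))

lemma vcons_single (a : α) {m : ℕ} (τ : Fin m → α) (r : ℤ) :
    vcons a (Finsupp.single τ r) = Finsupp.single (Fin.cons a τ) r := by
  simp [vcons, Finsupp.mapDomain_single]

lemma vmap_single (f : α → β) {m : ℕ} (σ : Fin m → α) (r : ℤ) :
    vmap f (Finsupp.single σ r) = Finsupp.single (f ∘ σ) r := by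
  simp [vmap, Finsupp.mapDomain_single]

lemma vmap_vmap {γ : Type*} (f : β → γ) (g : α → β) {m : ℕ} (c : DChain α m) :
    vmap f (vmap g c) = vmap (fun x => f (g x)) c := by
  simp only [vmap, Finsupp.lmapDomain_apply]
  rw [← Finsupp.mapDomain_comp]
  rfl

lemma vmap_id {m : ℕ} (c : DChain α m) : vmap (fun x : α => x) c = c := by
  simp only [vmap, Finsupp.lmapDomain_apply]
  have : (fun σ : Fin m → α => (fun x : α => x) ∘ σ) = id := by
    funext σ; rfl
  rw [this, Finsupp.mapDomain_id]

lemma dbd_single {m : ℕ} (σ : Fin (m + 1) → α) :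
    dbd (Finsupp.single σ (1 : ℤ)) =
      ∑ k : Fin (m + 1), ((-1 : ℤ) ^ (k : ℕ)) • Finsupp.single (σ ∘ k.succAbove) (1 : ℤ) := by
  simp [dbd, dface, Finsupp.mapDomain_single]

lemma comp_cons (f : α → β) (a : α) {m : ℕ} (τ : Fin m → α) :
    f ∘ Fin.cons a τ = Fin.cons (f a) (f ∘ τ) := by
  funext j
  refine Fin.cases ?_ (fun i => ?_) j <;> simp

lemma cons_comp_succAbove (a : α) {m : ℕ} (τ : Fin (m + 1) → α) (k : Fin (m + 1)) :
    (Fin.cons a τ : Fin (m + 2) → α) ∘ (Fin.succAbove k.succ) = Fin.cons a (τ ∘ k.succAbove) := by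
  funext j
  refine Fin.cases ?_ (fun i => ?_) j
  · simp [Fin.succ_succAbove_zero]
  · simp [Fin.succ_succAbove_succ]

lemma dbd_single_cons (a : α) {m : ℕ} (τ : Fin (m + 1) → α) :
    dbd (Finsupp.single (Fin.cons a τ : Fin (m + 2) → α) (1 : ℤ)) =
      Finsupp.single τ 1 - vcons a (dbd (Finsupp.single τ (1 : ℤ))) := by
  rw [dbd_single, Fin.sum_univ_succ]
  have h0 : (Fin.cons a τ : Fin (m + 2) → α) ∘ (Fin.succAbove 0) = τ := by
    funext j; simp [Fin.succAbove_zero]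
  rw [h0]
  have hrest : ∀ k : Fin (m + 1),
      ((-1 : ℤ) ^ ((k.succ : Fin (m+2)) : ℕ)) •
        Finsupp.single ((Fin.cons a τ : Fin (m + 2) → α) ∘ (Fin.succAbove k.succ)) (1 : ℤ)
      = -(((-1 : ℤ) ^ (k : ℕ)) • vcons a (Finsupp.single (τ ∘ k.succAbove) (1 : ℤ))) := by
    intro k
    rw [cons_comp_succAbove, vcons_single]
    rw [Fin.val_succ, pow_succ]
    module
  rw [Finset.sum_congr rfl (fun k _ => hrest k)]
  rw [dbd_single, map_sum]
  simp only [map_smul, Finset.sum_neg_distrib]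
  simp [sub_eq_add_neg]

lemma dbd_vcons (a : α) {m : ℕ} (D : DChain α (m + 1)) :
    dbd (vcons a D) = D - vcons a (dbd D) := by
  induction D using Finsupp.induction_linear with
  | zero => simp
  | add f g hf hg =>
      rw [map_add, map_add, map_add, map_add, hf, hg]; abel
  | single τ r =>
      rw [vcons_single]
      have h1 : (Finsupp.single (Fin.cons a τ : Fin (m + 2) → α) r : DChain α (m + 2))
          = r • Finsupp.single (Fin.cons a τ : Fin (m + 2) → α) (1 : ℤ) := by
        simp [Finsupp.smul_single]
      have h2 : (Finsupp.single τ r : DChain α (m + 1))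
          = r • Finsupp.single τ (1 : ℤ) := by
        simp [Finsupp.smul_single]
      rw [h1, h2, map_smul, map_smul, map_smul, dbd_single_cons, smul_sub]

end PrismMachine
section PrismMachine2

variable {α β : Type*}

/-- The prism operator on a single simplex. -/
noncomputable def hPs (f g : α → β) : ∀ m : ℕ, (Fin (m + 1) → α) → DChain β (m + 2)
  | 0, σ => Finsupp.single (Fin.cons (f (σ 0)) (g ∘ σ) : Fin 2 → β) 1
  | (m + 1), σ => vcons (f (σ 0))
      (Finsupp.single (g ∘ σ) 1 - hPs f g m (Fin.tail σ))

/-- The prism operator, extended linearly. -/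
noncomputable def hP (f g : α → β) (m : ℕ) : DChain α (m + 1) →ₗ[ℤ] DChain β (m + 2) :=
  (Finsupp.lift (DChain β (m + 2)) ℤ (Fin (m + 1) → α)) (hPs f g m)

lemma hP_single (f g : α → β) (m : ℕ) (σ : Fin (m + 1) → α) :
    hP f g m (Finsupp.single σ 1) = hPs f g m σ := by
  simp [hP]

lemma hP_single' (f g : α → β) (m : ℕ) (σ : Fin (m + 1) → α) (r : ℤ) :
    hP f g m (Finsupp.single σ r) = r • hPs f g m σ := by
  simp [hP]

/-- Degenerate shift of the prism operator. -/
noncomputable def hQ (f g : α → β) : ∀ m : ℕ, DChain α m →ₗ[ℤ] DChain β (m + 1)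
  | 0 => 0
  | (m + 1) => hP f g m

lemma hP_vcons (f g : α → β) (a : α) (m : ℕ) (D : DChain α m) :
    hP f g m (vcons a D) =
      vcons (f a) (vcons (g a) (vmap g D) - hQ f g m D) := by
  induction D using Finsupp.induction_linear with
  | zero => simp
  | add u v hu hv =>
      rw [map_add, map_add, hu, hv, ← map_add]
      congr 1
      rw [map_add, map_add, map_add]
      abel
  | single ρ r =>
      rw [vcons_single, vmap_single, vcons_single]
      cases m with
      | zero =>
          rw [hP_single']
          show r • hPs f g 0 (Fin.cons a ρ) = vcons (f a)
            (Finsupp.single (Fin.cons (g a) (g ∘ ρ)) r - (0 : _ →ₗ[ℤ] _) (Finsupp.single ρ r))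
          rw [hPs]
          simp only [LinearMap.zero_apply, sub_zero, vcons_single]
          have : (Fin.cons (f ((Fin.cons a ρ : Fin 1 → α) 0))
              (g ∘ (Fin.cons a ρ : Fin 1 → α)) : Fin 2 → β) =
              (Fin.cons (f a) (Fin.cons (g a) (g ∘ ρ) : Fin 1 → β) : Fin 2 → β) := by
            funext j
            refine Fin.cases rfl (fun i => ?_) j
            have hi : i = 0 := Subsingleton.elim _ _
            subst hi
            rfl
          rw [this]
          simp [Finsupp.smul_single]
      | succ m' =>
          rw [hP_single']
          show r • hPs f g (m' + 1) (Fin.cons a ρ) = vcons (f a)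
            (Finsupp.single (Fin.cons (g a) (g ∘ ρ)) r - hP f g m' (Finsupp.single ρ r))
          rw [hPs]
          have h1 : (Fin.cons a ρ : Fin (m' + 2) → α) 0 = a := rfl
          have h2 : Fin.tail (Fin.cons a ρ : Fin (m' + 2) → α) = ρ := by
            funext i; simp [Fin.tail]
          have h3 : g ∘ (Fin.cons a ρ : Fin (m' + 2) → α) = Fin.cons (g a) (g ∘ ρ) :=
            comp_cons g a ρ
          rw [h1, h2, h3, hP_single']
          rw [← map_smul (vcons (f a))]
          congr 1
          rw [smul_sub]
          congr 1
          simp [Finsupp.smul_single]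

/-- The correction term in the prism identity. -/
noncomputable def hR (f g : α → β) : ∀ m : ℕ, DChain α (m + 1) →ₗ[ℤ] DChain β (m + 1)
  | 0 => 0
  | (m + 1) => (hP f g m).comp (dbd : DChain α (m + 2) →ₗ[ℤ] DChain α (m + 1))

lemma hR_eq_hQ_dbd (f g : α → β) (m : ℕ) (c : DChain α (m + 1)) :
    hR f g m c = hQ f g m (dbd c) := by
  cases m with
  | zero => rfl
  | succ m' => rfl

theorem prism_id (f g : α → β) : ∀ (m : ℕ) (c : DChain α (m + 1)),
    dbd (hP f g m c) = vmap g c - vmap f c - hR f g m c := by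
  intro m
  induction m with
  | zero =>
      intro c
      induction c using Finsupp.induction_linear with
      | zero => simp
      | add u v hu hv => rw [map_add, map_add, map_add, map_add, map_add, hu, hv]; abel
      | single σ r =>
          rw [hP_single', map_smul, hPs]
          have hc : (Fin.cons (f (σ 0)) (g ∘ σ) : Fin 2 → β) =
              Fin.cons (f (σ 0)) (g ∘ σ) := rfl
          rw [dbd_single_cons (f (σ 0)) (g ∘ σ)]
          have h2 : dbd (Finsupp.single (g ∘ σ) (1 : ℤ) : DChain β 1) =
              Finsupp.single (Fin.elim0 : Fin 0 → β) 1 := by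
            rw [dbd_single]
            rw [Fin.sum_univ_one]
            have : ((g ∘ σ) ∘ Fin.succAbove 0 : Fin 0 → β) = Fin.elim0 := by
              funext j; exact j.elim0
            rw [this]
            simp
          rw [h2, vcons_single]
          have h3 : (Fin.cons (f (σ 0)) Fin.elim0 : Fin 1 → β) = f ∘ σ := by
            funext j
            refine Fin.cases rfl (fun i => i.elim0) j
          have h4 : ∀ (h : α → β), (h ∘ σ : Fin 1 → β) = fun _ => h (σ 0) := by
            intro h; funext j
            refine Fin.cases rfl (fun i => i.elim0) j
          rw [h3, vmap_single, vmap_single]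
          show r • ((Finsupp.single (g ∘ σ) 1 : DChain β 1) - Finsupp.single (f ∘ σ) 1) =
            Finsupp.single (g ∘ σ) r - Finsupp.single (f ∘ σ) r - (0 : _ →ₗ[ℤ] _) _
          simp [smul_sub, Finsupp.smul_single]
  | succ m ih =>
      intro c
      induction c using Finsupp.induction_linear with
      | zero => simp
      | add u v hu hv => rw [map_add, map_add, map_add, map_add, map_add, hu, hv]; abel
      | single σ r =>
          -- reduce coefficient r to 1
          have hr : (Finsupp.single σ r : DChain α (m + 2)) =
              r • Finsupp.single σ 1 := by simp [Finsupp.smul_single]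
          rw [hr, map_smul, map_smul, map_smul, map_smul, map_smul,
            ← smul_sub, ← smul_sub]
          congr 1
          -- now the unit-coefficient case
          set a := σ 0 with ha
          set τ := Fin.tail σ with hτ
          have hσ : σ = Fin.cons a τ := (Fin.cons_self_tail σ).symm
          have step1 : hP f g (m + 1) (Finsupp.single σ 1) =
              vcons (f a) (Finsupp.single (g ∘ σ) 1 - hP f g m (Finsupp.single τ 1)) := by
            rw [hP_single, hPs, hP_single]
          rw [step1, dbd_vcons, map_sub]
          rw [ih (Finsupp.single τ 1)]
          -- RHS side computation
          have hdb : dbd (Finsupp.single σ (1 : ℤ)) =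
              Finsupp.single τ 1 - vcons a (dbd (Finsupp.single τ 1)) := by
            conv_lhs => rw [hσ]
            exact dbd_single_cons a τ
          have hRterm : hR f g (m + 1) (Finsupp.single σ 1) =
              hP f g m (Finsupp.single τ (1:ℤ)) -
                vcons (f a) (vcons (g a) ((vmap g (dbd (Finsupp.single τ (1:ℤ) : DChain α (m+1))) : DChain β m)) -
                  hR f g m (Finsupp.single τ (1:ℤ))) := by
            show hP f g m (dbd (Finsupp.single σ 1)) = _
            rw [hdb, map_sub, hP_vcons, hR_eq_hQ_dbd]
          rw [hRterm]
          have hgb : dbd (Finsupp.single (g ∘ σ) (1 : ℤ)) =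
              (Finsupp.single (g ∘ τ) (1:ℤ) : DChain β (m+1)) -
                vcons (g a) ((vmap g (dbd (Finsupp.single τ (1:ℤ) : DChain α (m+1))) : DChain β m)) := by
            have : (g ∘ σ : Fin (m + 2) → β) = Fin.cons (g a) (g ∘ τ) := by
              conv_lhs => rw [hσ]
              exact comp_cons g a τ
            rw [this, dbd_single_cons]
            congr 2
            rw [← vmap_single g τ 1, dbd_vmap]
          rw [hgb]
          have hgτ : vmap g (Finsupp.single τ (1:ℤ)) = Finsupp.single (g ∘ τ) 1 :=
            vmap_single g τ 1
          have hgσ2 : vmap g (Finsupp.single σ (1:ℤ)) = Finsupp.single (g ∘ σ) 1 :=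
            vmap_single g σ 1
          have hfσ : vcons (f a) (vmap f (Finsupp.single τ (1:ℤ))) =
              vmap f (Finsupp.single σ 1) := by
            rw [vmap_single, vcons_single, vmap_single]
            congr 1
            conv_rhs => rw [hσ]
            exact (comp_cons f a τ).symm
          simp only [map_sub]
          rw [hgτ, hfσ, hgσ2]
          abel

end PrismMachine2
section PrismSupport

variable {α β : Type*}

lemma hPs_support (f g : α → β) : ∀ (m : ℕ) (σ : Fin (m + 1) → α),
    ∀ τ ∈ (hPs f g m σ).support, ∀ j, τ j ∈ Set.range (f ∘ σ) ∪ Set.range (g ∘ σ) := by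
  classical
  intro m
  induction m with
  | zero =>
      intro σ τ hτ j
      have := Finsupp.support_single_subset hτ
      rw [Finset.mem_singleton] at this
      subst this
      refine Fin.cases ?_ (fun i => ?_) j
      · exact Or.inl ⟨0, rfl⟩
      · exact Or.inr ⟨i, rfl⟩
  | succ m ih =>
      intro σ τ hτ j
      rw [hPs] at hτ
      have h1 := Finsupp.mapDomain_support (f := fun ρ : Fin (m + 2) → β =>
        (Fin.cons (f (σ 0)) ρ : Fin (m + 3) → β)) hτ
      rw [Finset.mem_image] at h1
      obtain ⟨ρ, hρ, rfl⟩ := h1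
      have h2 := Finsupp.support_sub hρ
      rw [Finset.mem_union] at h2
      have hj : ∀ i : Fin (m + 2), ρ i ∈ Set.range (f ∘ σ) ∪ Set.range (g ∘ σ) := by
        intro i
        rcases h2 with h | h
        · have := Finsupp.support_single_subset h
          rw [Finset.mem_singleton] at this
          subst this
          exact Or.inr ⟨i, rfl⟩
        · rcases ih (Fin.tail σ) ρ h i with ⟨k, hk⟩ | ⟨k, hk⟩
          · exact Or.inl ⟨k.succ, hk⟩
          · exact Or.inr ⟨k.succ, hk⟩
      refine Fin.cases ?_ (fun i => ?_) j
      · exact Or.inl ⟨0, rfl⟩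
      · simpa using hj i

lemma hP_support (f g : α → β) (m : ℕ) (c : DChain α (m + 1)) :
    ∀ τ ∈ (hP f g m c).support, ∃ σ ∈ c.support,
      ∀ j, τ j ∈ Set.range (f ∘ σ) ∪ Set.range (g ∘ σ) := by
  classical
  intro τ hτ
  have : hP f g m c = ∑ σ ∈ c.support, c σ • hPs f g m σ := by
    simp [hP, Finsupp.lift_apply, Finsupp.sum]
  rw [this] at hτ
  have h1 := Finsupp.support_finset_sum hτ
  rw [Finset.mem_biUnion] at h1
  obtain ⟨σ, hσ, hτσ⟩ := h1
  exact ⟨σ, hσ, hPs_support f g m σ τ (Finsupp.support_smul hτσ)⟩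

/-- Prism corollary: for a cycle `c`, the images under two vertex maps differ by the
boundary of a chain whose simplices are carried by the simplices of `c`. -/
lemma prism_boundary (f g : α → β) {n : ℕ} (c : DChain α (n + 1))
    (hc : n = 0 ∨ dbd c = 0) :
    ∃ d : DChain β (n + 2), dbd d = vmap g c - vmap f c ∧
      ∀ τ ∈ d.support, ∃ σ ∈ c.support,
        ∀ j, τ j ∈ Set.range (f ∘ σ) ∪ Set.range (g ∘ σ) := by
  refine ⟨hP f g n c, ?_, hP_support f g n c⟩
  rw [prism_id]
  rcases hc with h | h
  · subst h
    show _ - (0 : DChain α 1 →ₗ[ℤ] DChain β 1) c = _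
    simp
  · cases n with
    | zero =>
        show _ - (0 : DChain α 1 →ₗ[ℤ] DChain β 1) c = _
        simp
    | succ k =>
        show _ - hP f g k (dbd c) = _
        rw [h, map_zero, sub_zero]

end PrismSupport

section Contiguity

variable {X : Type*} [TopologicalSpace X] {α : Type*}

/-- Contiguity for nerve chains: if two set-valued vertex maps on a cycle admit, for each
simplex, a common point lying in all the image sets (which lie in `O`), then the two image
cycles differ by a boundary of a nerve chain of `O`. -/
lemma corN (g1 g2 : α → Set X) (O : Set (Set X)) {n : ℕ} (c : DChain α (n + 1))
    (hc : n = 0 ∨ dbd c = 0)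
    (H : ∀ σ ∈ c.support, ∃ x : X, ∀ j,
      (x ∈ g1 (σ j) ∧ g1 (σ j) ∈ O) ∧ (x ∈ g2 (σ j) ∧ g2 (σ j) ∈ O)) :
    vmap g2 c - vmap g1 c ∈ nerveBd O n := by
  obtain ⟨d, hd, hsupp⟩ := prism_boundary g1 g2 c hc
  refine ⟨d, ?_, hd⟩
  intro τ hτ
  obtain ⟨σ, hσ, hj⟩ := hsupp τ hτ
  obtain ⟨x, hx⟩ := H σ hσ
  constructor
  · intro i
    rcases hj i with ⟨k, hk⟩ | ⟨k, hk⟩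
    · rw [← hk]; exact (hx k).1.2
    · rw [← hk]; exact (hx k).2.2
  · refine ⟨x, Set.mem_iInter.mpr fun i => ?_⟩
    rcases hj i with ⟨k, hk⟩ | ⟨k, hk⟩
    · rw [← hk]; exact (hx k).1.1
    · rw [← hk]; exact (hx k).2.1

/-- Contiguity for fine chains: if two point-valued vertex maps on a cycle admit, for each
simplex, a common element of `O` containing all image points, then the two image cycles
differ by a boundary of an `O`-fine chain. -/
lemma corF (g1 g2 : α → X) (O : Set (Set X)) {n : ℕ} (c : DChain α (n + 1))
    (hc : n = 0 ∨ dbd c = 0)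
    (H : ∀ σ ∈ c.support, ∃ W ∈ O, ∀ j, g1 (σ j) ∈ W ∧ g2 (σ j) ∈ W) :
    vmap g2 c - vmap g1 c ∈ fineBd O n := by
  obtain ⟨d, hd, hsupp⟩ := prism_boundary g1 g2 c hc
  refine ⟨d, ?_, hd⟩
  intro τ hτ
  obtain ⟨σ, hσ, hj⟩ := hsupp τ hτ
  obtain ⟨W, hW, hx⟩ := H σ hσ
  refine ⟨W, hW, ?_⟩
  rintro _ ⟨i, rfl⟩
  rcases hj i with ⟨k, hk⟩ | ⟨k, hk⟩
  · rw [← hk]; exact (hx k).1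
  · rw [← hk]; exact (hx k).2

end Contiguity
section Covers

variable {X : Type*} [TopologicalSpace X]

lemma refines_trans {A B C : Set (Set X)} (h1 : Refines A B) (h2 : Refines B C) :
    Refines A C := by
  intro U hU
  obtain ⟨V, hV, hUV⟩ := h1 U hU
  obtain ⟨W, hW, hVW⟩ := h2 V hV
  exact ⟨W, hW, hUV.trans hVW⟩

lemma exists_good (hsr : SuperRefinable X) (O : Cov X) :
    ∃ P : Cov X, SuperRefines P.1 O.1 ∧ Refines P.1 O.1 := by
  obtain ⟨O', hO', hsup⟩ := hsr O.1 O.2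
  refine ⟨⟨{S | ∃ U ∈ O', ∃ V ∈ O.1, S = U ∩ V}, ⟨?_, ?_⟩⟩, ?_, ?_⟩
  · rintro S ⟨U, hU, V, hV, rfl⟩
    exact (hO'.1 U hU).inter (O.2.1 V hV)
  · apply Set.eq_univ_of_forall
    intro x
    have hx1 : x ∈ ⋃₀ O' := by rw [hO'.2]; trivial
    have hx2 : x ∈ ⋃₀ O.1 := by rw [O.2.2]; trivial
    obtain ⟨U, hU, hxU⟩ := hx1
    obtain ⟨V, hV, hxV⟩ := hx2
    exact ⟨U ∩ V, ⟨U, hU, V, hV, rfl⟩, hxU, hxV⟩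
  · intro x
    obtain ⟨W, hW, hprop⟩ := hsup x
    refine ⟨W, hW, ?_⟩
    rintro S ⟨U, hU, V, hV, rfl⟩ ⟨hxU, _⟩
    exact Set.inter_subset_left.trans (hprop U hU hxU)
  · rintro S ⟨U, hU, V, hV, rfl⟩
    exact ⟨V, hV, Set.inter_subset_right⟩

/-- A chosen super-refinement (which also refines) of a cover. -/
noncomputable def srCov (hsr : SuperRefinable X) (O : Cov X) : Cov X :=
  (exists_good hsr O).choose

lemma srCov_super (hsr : SuperRefinable X) (O : Cov X) :
    SuperRefines (srCov hsr O).1 O.1 :=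
  (exists_good hsr O).choose_spec.1

lemma srCov_ref (hsr : SuperRefinable X) (O : Cov X) :
    Refines (srCov hsr O).1 O.1 :=
  (exists_good hsr O).choose_spec.2

/-- A chosen parent map: `parMap hsr O x` is an element of `O` containing every member of
`srCov hsr O` that contains `x`. -/
noncomputable def parMap (hsr : SuperRefinable X) (O : Cov X) (x : X) : Set X :=
  (srCov_super hsr O x).choose

lemma parMap_mem (hsr : SuperRefinable X) (O : Cov X) (x : X) :
    parMap hsr O x ∈ O.1 :=
  (srCov_super hsr O x).choose_spec.1

lemma parMap_sup (hsr : SuperRefinable X) (O : Cov X) (x : X) :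
    ∀ V ∈ (srCov hsr O).1, x ∈ V → V ⊆ parMap hsr O x :=
  (srCov_super hsr O x).choose_spec.2

open Classical in
/-- A chosen point in each nonempty subset. -/
noncomputable def ptMap [Nonempty X] (U : Set X) : X :=
  if h : U.Nonempty then h.choose else Classical.arbitrary X

open Classical in
lemma ptMap_mem [Nonempty X] {U : Set X} (h : U.Nonempty) : ptMap U ∈ U := by
  rw [ptMap, dif_pos h]
  exact h.choose_spec

/-- The common refinement of two covers by pairwise intersections. -/
noncomputable def interCov (A B : Cov X) : Cov X :=
  ⟨{S | ∃ U ∈ A.1, ∃ V ∈ B.1, S = U ∩ V}, by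
    constructor
    · rintro S ⟨U, hU, V, hV, rfl⟩
      exact (A.2.1 U hU).inter (B.2.1 V hV)
    · apply Set.eq_univ_of_forall
      intro x
      have hx1 : x ∈ ⋃₀ A.1 := by rw [A.2.2]; trivial
      have hx2 : x ∈ ⋃₀ B.1 := by rw [B.2.2]; trivial
      obtain ⟨U, hU, hxU⟩ := hx1
      obtain ⟨V, hV, hxV⟩ := hx2
      exact ⟨U ∩ V, ⟨U, hU, V, hV, rfl⟩, hxU, hxV⟩⟩

lemma interCov_refl (A B : Cov X) : Refines (interCov A B).1 A.1 := by
  rintro S ⟨U, hU, V, hV, rfl⟩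
  exact ⟨U, hU, Set.inter_subset_left⟩

lemma interCov_refr (A B : Cov X) : Refines (interCov A B).1 B.1 := by
  rintro S ⟨U, hU, V, hV, rfl⟩
  exact ⟨V, hV, Set.inter_subset_right⟩

open Classical in
/-- A chosen spouse map for a refinement. -/
noncomputable def spouseMap {A B : Set (Set X)} (h : Refines A B) (U : Set X) : Set X :=
  if hh : ∃ V ∈ B, U ⊆ V then hh.choose else U

lemma spouseMap_isSpouse {A B : Set (Set X)} (h : Refines A B) :
    IsSpouse A B (spouseMap h) := by
  intro U hU
  have hh : ∃ V ∈ B, U ⊆ V := h U hU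
  classical
  rw [spouseMap, dif_pos hh]
  exact ⟨hh.choose_spec.2, hh.choose_spec.1⟩

end Covers

section Transfer

variable {X : Type*} [TopologicalSpace X] (hsr : SuperRefinable X) (O : Cov X)

lemma ptFine [Nonempty X] {m : ℕ} {d : DChain (Set X) (m + 1)}
    (hd : NerveChain (srCov hsr O).1 d) : FineChain O.1 (vmap (ptMap (X := X)) d) := by
  classical
  intro σ hσ
  have h1 := Finsupp.mapDomain_support (f := fun τ : Fin (m + 1) → Set X => ptMap ∘ τ) hσ
  rw [Finset.mem_image] at h1
  obtain ⟨τ, hτ, rfl⟩ := h1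
  obtain ⟨hτO, x, hx⟩ := hd τ hτ
  rw [Set.mem_iInter] at hx
  refine ⟨parMap hsr O x, parMap_mem hsr O x, ?_⟩
  rintro _ ⟨j, rfl⟩
  have hsub : τ j ⊆ parMap hsr O x := parMap_sup hsr O x (τ j) (hτO j) (hx j)
  exact hsub (ptMap_mem ⟨x, hx j⟩)

lemma parNerve {m : ℕ} {d : DChain X (m + 1)}
    (hd : FineChain (srCov hsr O).1 d) : NerveChain O.1 (vmap (parMap hsr O) d) := by
  classical
  intro τ hτ
  have h1 := Finsupp.mapDomain_support (f := fun σ : Fin (m + 1) → X => parMap hsr O ∘ σ) hτ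
  rw [Finset.mem_image] at h1
  obtain ⟨σ, hσ', rfl⟩ := h1
  obtain ⟨V, hV, hsub⟩ := hd σ hσ'
  refine ⟨fun j => parMap_mem hsr O (σ j), σ 0, Set.mem_iInter.mpr fun j => ?_⟩
  exact (parMap_sup hsr O (σ j) V hV (hsub ⟨j, rfl⟩)) (hsub ⟨0, rfl⟩)

lemma ptBd [Nonempty X] {n : ℕ} {c : DChain (Set X) (n + 1)}
    (hc : c ∈ nerveBd (srCov hsr O).1 n) : vmap (ptMap (X := X)) c ∈ fineBd O.1 n := by
  obtain ⟨d, hd, rfl⟩ := hc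
  exact ⟨vmap ptMap d, ptFine hsr O hd, dbd_vmap _ d⟩

lemma parBd {n : ℕ} {c : DChain X (n + 1)}
    (hc : c ∈ fineBd (srCov hsr O).1 n) : vmap (parMap hsr O) c ∈ nerveBd O.1 n := by
  obtain ⟨d, hd, rfl⟩ := hc
  exact ⟨vmap (parMap hsr O) d, parNerve hsr O hd, dbd_vmap _ d⟩

lemma ptCyc [Nonempty X] {n : ℕ} {c : DChain (Set X) (n + 1)}
    (hc : c ∈ nerveCyc (srCov hsr O).1 n) : vmap (ptMap (X := X)) c ∈ fineCyc O.1 n := by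
  obtain ⟨h1, h2⟩ := hc
  refine ⟨ptFine hsr O h1, ?_⟩
  rcases h2 with h | h
  · exact Or.inl h
  · exact Or.inr (by rw [dbd_vmap, h, map_zero])

lemma parCyc {n : ℕ} {c : DChain X (n + 1)}
    (hc : c ∈ fineCyc (srCov hsr O).1 n) : vmap (parMap hsr O) c ∈ nerveCyc O.1 n := by
  obtain ⟨h1, h2⟩ := hc
  refine ⟨parNerve hsr O h1, ?_⟩
  rcases h2 with h | h
  · exact Or.inl h
  · exact Or.inr (by rw [dbd_vmap, h, map_zero])

end Transfer

section MkEq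

variable {X : Type*} [TopologicalSpace X]

lemma nerve_mk_eq {O : Set (Set X)} {n : ℕ} {x y : nerveCyc O n}
    (h : (x : DChain (Set X) (n + 1)) - y ∈ nerveBd O n) :
    (QuotientAddGroup.mk x : nerveH O n) = QuotientAddGroup.mk y := by
  rw [QuotientAddGroup.eq]
  rw [AddSubgroup.mem_addSubgroupOf]
  have : ((-x + y : nerveCyc O n) : DChain (Set X) (n + 1)) =
      -((x : DChain (Set X) (n + 1)) - y) := by push_cast; abel
  rw [this]
  exact neg_mem h

lemma nerve_mk_eq' {O : Set (Set X)} {n : ℕ} {x y : nerveCyc O n}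
    (h : (QuotientAddGroup.mk x : nerveH O n) = QuotientAddGroup.mk y) :
    (x : DChain (Set X) (n + 1)) - y ∈ nerveBd O n := by
  rw [QuotientAddGroup.eq] at h
  rw [AddSubgroup.mem_addSubgroupOf] at h
  have h2 := neg_mem h
  have : -((-x + y : nerveCyc O n) : DChain (Set X) (n + 1)) =
      (x : DChain (Set X) (n + 1)) - y := by push_cast; abel
  rwa [this] at h2

lemma fine_mk_eq {O : Set (Set X)} {n : ℕ} {x y : fineCyc O n}
    (h : (x : DChain X (n + 1)) - y ∈ fineBd O n) :
    (QuotientAddGroup.mk x : discH O n) = QuotientAddGroup.mk y := by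
  rw [QuotientAddGroup.eq]
  rw [AddSubgroup.mem_addSubgroupOf]
  have : ((-x + y : fineCyc O n) : DChain X (n + 1)) =
      -((x : DChain X (n + 1)) - y) := by push_cast; abel
  rw [this]
  exact neg_mem h

lemma fine_mk_eq' {O : Set (Set X)} {n : ℕ} {x y : fineCyc O n}
    (h : (QuotientAddGroup.mk x : discH O n) = QuotientAddGroup.mk y) :
    (x : DChain X (n + 1)) - y ∈ fineBd O n := by
  rw [QuotientAddGroup.eq] at h
  rw [AddSubgroup.mem_addSubgroupOf] at h
  have h2 := neg_mem h
  have : -((-x + y : fineCyc O n) : DChain X (n + 1)) =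
      (x : DChain X (n + 1)) - y := by push_cast; abel
  rwa [this] at h2

end MkEq
section MainMaps

variable {X : Type*} [TopologicalSpace X]

/-- The map on homology induced by the point choice, from the nerve homology of the chosen
super-refinement of `O` to the discrete homology at `O`. -/
noncomputable def NFhom (hsr : SuperRefinable X) [Nonempty X] (n : ℕ) (O : Cov X) :
    nerveH (srCov hsr O).1 n →+ discH O.1 n :=
  QuotientAddGroup.lift _
    ((QuotientAddGroup.mk' ((fineBd O.1 n).addSubgroupOf (fineCyc O.1 n))).comp
      (AddMonoidHom.mk' (fun b : nerveCyc (srCov hsr O).1 n =>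
        (⟨vmap (ptMap (X := X)) b.1, ptCyc hsr O b.2⟩ : fineCyc O.1 n))
        (fun a b => Subtype.ext (map_add _ _ _))))
    (by
      intro x hx
      rw [AddMonoidHom.mem_ker]
      show QuotientAddGroup.mk _ = 0
      rw [QuotientAddGroup.eq_zero_iff]
      rw [AddSubgroup.mem_addSubgroupOf]
      exact ptBd hsr O (AddSubgroup.mem_addSubgroupOf.mp hx))

lemma NFhom_mk (hsr : SuperRefinable X) [Nonempty X] (n : ℕ) (O : Cov X)
    (b : nerveCyc (srCov hsr O).1 n) :
    NFhom hsr n O (QuotientAddGroup.mk b) =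
      QuotientAddGroup.mk (⟨vmap (ptMap (X := X)) b.1, ptCyc hsr O b.2⟩ : fineCyc O.1 n) :=
  rfl

/-- The map on homology induced by the parent choice, from the discrete homology of the
chosen super-refinement of `O` to the nerve homology at `O`. -/
noncomputable def PNhom (hsr : SuperRefinable X) (n : ℕ) (O : Cov X) :
    discH (srCov hsr O).1 n →+ nerveH O.1 n :=
  QuotientAddGroup.lift _
    ((QuotientAddGroup.mk' ((nerveBd O.1 n).addSubgroupOf (nerveCyc O.1 n))).comp
      (AddMonoidHom.mk' (fun a : fineCyc (srCov hsr O).1 n =>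
        (⟨vmap (parMap hsr O) a.1, parCyc hsr O a.2⟩ : nerveCyc O.1 n))
        (fun a b => Subtype.ext (map_add _ _ _))))
    (by
      intro x hx
      rw [AddMonoidHom.mem_ker]
      show QuotientAddGroup.mk _ = 0
      rw [QuotientAddGroup.eq_zero_iff]
      rw [AddSubgroup.mem_addSubgroupOf]
      exact parBd hsr O (AddSubgroup.mem_addSubgroupOf.mp hx))

lemma PNhom_mk (hsr : SuperRefinable X) (n : ℕ) (O : Cov X)
    (a : fineCyc (srCov hsr O).1 n) :
    PNhom hsr n O (QuotientAddGroup.mk a) =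
      QuotientAddGroup.mk (⟨vmap (parMap hsr O) a.1, parCyc hsr O a.2⟩ : nerveCyc O.1 n) :=
  rfl

lemma Phi_mem (hsr : SuperRefinable X) [Nonempty X] (n : ℕ)
    (u : ∀ O : Cov X, nerveH O.1 n) (hu : u ∈ cechHomology X n) :
    (fun O => NFhom hsr n O (u (srCov hsr O))) ∈ discreteHomology X n := by
  intro O' O href c' c hc' hc
  set P' := srCov hsr O' with hP'
  set P := srCov hsr O with hP
  set Q := interCov P' P with hQdef
  obtain ⟨b', hb'⟩ := QuotientAddGroup.mk_surjective (u P')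
  obtain ⟨b, hb⟩ := QuotientAddGroup.mk_surjective (u P)
  obtain ⟨b'', hb''⟩ := QuotientAddGroup.mk_surjective (u Q)
  set f' := spouseMap (interCov_refl P' P) with hf'def
  set f := spouseMap (interCov_refr P' P) with hfdef
  have hsp' := spouseMap_isSpouse (interCov_refl P' P)
  have hsp := spouseMap_isSpouse (interCov_refr P' P)
  -- canonical representatives
  have d1 : (c' : DChain X (n + 1)) - vmap (ptMap (X := X)) b'.1 ∈ fineBd O'.1 n := by
    refine fine_mk_eq' (x := c') (y := ⟨vmap (ptMap (X := X)) b'.1, ptCyc hsr O' b'.2⟩) ?_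
    rw [hc']
    show NFhom hsr n O' (u P') = _
    rw [← hb']
    rfl
  have d2 : (c : DChain X (n + 1)) - vmap (ptMap (X := X)) b.1 ∈ fineBd O.1 n := by
    refine fine_mk_eq' (x := c) (y := ⟨vmap (ptMap (X := X)) b.1, ptCyc hsr O b.2⟩) ?_
    rw [hc]
    show NFhom hsr n O (u P) = _
    rw [← hb]
    rfl
  -- compatibility of u along the spouse maps
  have A' : vmap (ptMap (X := X)) (vmap f' b''.1 - b'.1) ∈ fineBd O'.1 n :=
    ptBd hsr O' (hu Q P' (interCov_refl P' P) b'' b' f' hsp' hb'' hb')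
  have A : vmap (ptMap (X := X)) (vmap f b''.1 - b.1) ∈ fineBd O.1 n :=
    ptBd hsr O (hu Q P (interCov_refr P' P) b'' b f hsp hb'' hb)
  -- contiguity
  have B' : vmap (fun U => ptMap (f' U)) b''.1 - vmap (ptMap (X := X)) b''.1
      ∈ fineBd O'.1 n := by
    refine corF _ _ _ _ b''.2.2 ?_
    intro σ hσ
    obtain ⟨hσO, x, hx⟩ := b''.2.1 σ hσ
    rw [Set.mem_iInter] at hx
    refine ⟨parMap hsr O' x, parMap_mem hsr O' x, fun j => ?_⟩
    obtain ⟨V', hV', hsubV'⟩ := interCov_refl P' P (σ j) (hσO j)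
    have hxV' : x ∈ V' := hsubV' (hx j)
    have hWV' : V' ⊆ parMap hsr O' x := parMap_sup hsr O' x V' hV' hxV'
    obtain ⟨hsubf, hmemf⟩ := hsp' (σ j) (hσO j)
    have hWf : f' (σ j) ⊆ parMap hsr O' x :=
      parMap_sup hsr O' x _ hmemf (hsubf (hx j))
    exact ⟨hWV' (hsubV' (ptMap_mem ⟨x, hx j⟩)),
      hWf (ptMap_mem ⟨x, hsubf (hx j)⟩)⟩
  have B : vmap (fun U => ptMap (f U)) b''.1 - vmap (ptMap (X := X)) b''.1
      ∈ fineBd O.1 n := by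
    refine corF _ _ _ _ b''.2.2 ?_
    intro σ hσ
    obtain ⟨hσO, x, hx⟩ := b''.2.1 σ hσ
    rw [Set.mem_iInter] at hx
    refine ⟨parMap hsr O x, parMap_mem hsr O x, fun j => ?_⟩
    obtain ⟨V', hV', hsubV'⟩ := interCov_refr P' P (σ j) (hσO j)
    have hxV' : x ∈ V' := hsubV' (hx j)
    have hWV' : V' ⊆ parMap hsr O x := parMap_sup hsr O x V' hV' hxV'
    obtain ⟨hsubf, hmemf⟩ := hsp (σ j) (hσO j)
    have hWf : f (σ j) ⊆ parMap hsr O x :=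
      parMap_sup hsr O x _ hmemf (hsubf (hx j))
    exact ⟨hWV' (hsubV' (ptMap_mem ⟨x, hx j⟩)),
      hWf (ptMap_mem ⟨x, hsubf (hx j)⟩)⟩
  have e1 : vmap (ptMap (X := X)) (vmap f' b''.1) = vmap (fun U => ptMap (f' U)) b''.1 :=
    vmap_vmap _ _ _
  have e2 : vmap (ptMap (X := X)) (vmap f b''.1) = vmap (fun U => ptMap (f U)) b''.1 :=
    vmap_vmap _ _ _
  have key : (c' : DChain X (n + 1)) - c =
      ((c' : DChain X (n + 1)) - vmap (ptMap (X := X)) b'.1)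
      - ((c : DChain X (n + 1)) - vmap (ptMap (X := X)) b.1)
      - vmap (ptMap (X := X)) (vmap f' b''.1 - b'.1)
      + (vmap (fun U => ptMap (f' U)) b''.1 - vmap (ptMap (X := X)) b''.1)
      - (vmap (fun U => ptMap (f U)) b''.1 - vmap (ptMap (X := X)) b''.1)
      + vmap (ptMap (X := X)) (vmap f b''.1 - b.1) := by
    rw [map_sub, map_sub, e1, e2]
    abel
  rw [key]
  exact add_mem (sub_mem (add_mem (sub_mem (sub_mem (fineBd_mono href d1) d2)
    (fineBd_mono href A')) (fineBd_mono href B')) B) A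

lemma Psi_mem (hsr : SuperRefinable X) [Nonempty X] (n : ℕ)
    (u : ∀ O : Cov X, discH O.1 n) (hu : u ∈ discreteHomology X n) :
    (fun O => PNhom hsr n O (u (srCov hsr O))) ∈ cechHomology X n := by
  intro O' O href c' c fa hfa hc' hc
  set P' := srCov hsr O' with hP'
  set P := srCov hsr O with hP
  set Q := interCov P' P with hQdef
  obtain ⟨a', ha'⟩ := QuotientAddGroup.mk_surjective (u P')
  obtain ⟨a, ha⟩ := QuotientAddGroup.mk_surjective (u P)
  obtain ⟨a'', ha''⟩ := QuotientAddGroup.mk_surjective (u Q)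
  have d1 : (c' : DChain (Set X) (n + 1)) - vmap (parMap hsr O') a'.1 ∈ nerveBd O'.1 n := by
    refine nerve_mk_eq' (x := c') (y := ⟨vmap (parMap hsr O') a'.1, parCyc hsr O' a'.2⟩) ?_
    rw [hc']
    show PNhom hsr n O' (u P') = _
    rw [← ha']
    rfl
  have d2 : (c : DChain (Set X) (n + 1)) - vmap (parMap hsr O) a.1 ∈ nerveBd O.1 n := by
    refine nerve_mk_eq' (x := c) (y := ⟨vmap (parMap hsr O) a.1, parCyc hsr O a.2⟩) ?_
    rw [hc]
    show PNhom hsr n O (u P) = _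
    rw [← ha]
    rfl
  have w1 : (a'' : DChain X (n + 1)) - a'.1 ∈ fineBd P'.1 n :=
    hu Q P' (interCov_refl P' P) a'' a' ha'' ha'
  have w2 : (a'' : DChain X (n + 1)) - a.1 ∈ fineBd P.1 n :=
    hu Q P (interCov_refr P' P) a'' a ha'' ha
  have E1 : vmap fa (vmap (parMap hsr O') ((a'' : DChain X (n + 1)) - a'.1))
      ∈ nerveBd O.1 n := nerveBd_vmap hfa (parBd hsr O' w1)
  have E2 : vmap (parMap hsr O) ((a'' : DChain X (n + 1)) - a.1) ∈ nerveBd O.1 n :=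
    parBd hsr O w2
  have M : vmap (fun x => fa (parMap hsr O' x)) a''.1 - vmap (parMap hsr O) a''.1
      ∈ nerveBd O.1 n := by
    refine corN _ _ _ _ a''.2.2 ?_
    intro σ hσ
    obtain ⟨V, hV, hsub⟩ := a''.2.1 σ hσ
    have hx0 : σ 0 ∈ V := hsub ⟨0, rfl⟩
    obtain ⟨V1, hV1, hVV1⟩ := interCov_refl P' P V hV
    obtain ⟨V2, hV2, hVV2⟩ := interCov_refr P' P V hV
    refine ⟨σ 0, fun j => ?_⟩
    have hj : σ j ∈ V := hsub ⟨j, rfl⟩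
    constructor
    · -- parMap hsr O
      refine ⟨?_, parMap_mem hsr O (σ j)⟩
      have : V2 ⊆ parMap hsr O (σ j) := parMap_sup hsr O (σ j) V2 hV2 (hVV2 hj)
      exact this (hVV2 hx0)
    · -- fa ∘ parMap hsr O'
      obtain ⟨hsubfa, hmemfa⟩ := hfa (parMap hsr O' (σ j)) (parMap_mem hsr O' (σ j))
      refine ⟨?_, hmemfa⟩
      have h1 : V1 ⊆ parMap hsr O' (σ j) := parMap_sup hsr O' (σ j) V1 hV1 (hVV1 hj)
      exact hsubfa (h1 (hVV1 hx0))
  have e1 : vmap fa (vmap (parMap hsr O') a''.1) =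
      vmap (fun x => fa (parMap hsr O' x)) a''.1 := vmap_vmap _ _ _
  have key : vmap fa (c' : DChain (Set X) (n + 1)) - c =
      vmap fa ((c' : DChain (Set X) (n + 1)) - vmap (parMap hsr O') a'.1)
      - vmap fa (vmap (parMap hsr O') ((a'' : DChain X (n + 1)) - a'.1))
      + (vmap (fun x => fa (parMap hsr O' x)) a''.1 - vmap (parMap hsr O) a''.1)
      + vmap (parMap hsr O) ((a'' : DChain X (n + 1)) - a.1)
      - ((c : DChain (Set X) (n + 1)) - vmap (parMap hsr O) a.1) := by
    rw [map_sub, map_sub, map_sub, map_sub, e1]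
    abel
  rw [key]
  exact sub_mem (add_mem (add_mem (sub_mem (nerveBd_vmap hfa d1) E1) M) E2) d2

lemma PsiPhi (hsr : SuperRefinable X) [Nonempty X] (n : ℕ)
    (u : ∀ O : Cov X, nerveH O.1 n) (hu : u ∈ cechHomology X n) (O : Cov X) :
    PNhom hsr n O (NFhom hsr n (srCov hsr O) (u (srCov hsr (srCov hsr O)))) = u O := by
  set P := srCov hsr O with hP
  set P2 := srCov hsr P with hP2
  obtain ⟨b, hb⟩ := QuotientAddGroup.mk_surjective (u P2)
  obtain ⟨c, hc⟩ := QuotientAddGroup.mk_surjective (u O)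
  have htrans : Refines P2.1 O.1 := refines_trans (srCov_ref hsr P) (srCov_ref hsr O)
  set f := spouseMap htrans with hfdef
  have hsp := spouseMap_isSpouse htrans
  have hcomp : vmap f b.1 - c.1 ∈ nerveBd O.1 n :=
    hu P2 O htrans b c f hsp hb hc
  have M : vmap (fun U => parMap hsr O (ptMap U)) b.1 - vmap f b.1 ∈ nerveBd O.1 n := by
    refine corN _ _ _ _ b.2.2 ?_
    intro σ hσ
    obtain ⟨hσO, x, hx⟩ := b.2.1 σ hσ
    rw [Set.mem_iInter] at hx
    refine ⟨x, fun j => ?_⟩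
    obtain ⟨hsubf, hmemf⟩ := hsp (σ j) (hσO j)
    refine ⟨⟨hsubf (hx j), hmemf⟩, ?_, parMap_mem hsr O (ptMap (σ j))⟩
    obtain ⟨V, hV, hsubV⟩ := srCov_ref hsr P (σ j) (hσO j)
    have hyV : ptMap (σ j) ∈ V := hsubV (ptMap_mem ⟨x, hx j⟩)
    have : V ⊆ parMap hsr O (ptMap (σ j)) := parMap_sup hsr O (ptMap (σ j)) V hV hyV
    exact this (hsubV (hx j))
  rw [← hb, ← hc]
  rw [NFhom_mk, PNhom_mk]
  refine nerve_mk_eq ?_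
  have e1 : vmap (parMap hsr O) (vmap (ptMap (X := X)) b.1) =
      vmap (fun U => parMap hsr O (ptMap U)) b.1 := vmap_vmap _ _ _
  show vmap (parMap hsr O) (vmap (ptMap (X := X)) b.1) - c.1 ∈ nerveBd O.1 n
  rw [e1]
  have key : vmap (fun U => parMap hsr O (ptMap U)) b.1 - c.1 =
      (vmap (fun U => parMap hsr O (ptMap U)) b.1 - vmap f b.1)
      + (vmap f b.1 - c.1) := by abel
  rw [key]
  exact add_mem M hcomp

lemma PhiPsi (hsr : SuperRefinable X) [Nonempty X] (n : ℕ)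
    (u : ∀ O : Cov X, discH O.1 n) (hu : u ∈ discreteHomology X n) (O : Cov X) :
    NFhom hsr n O (PNhom hsr n (srCov hsr O) (u (srCov hsr (srCov hsr O)))) = u O := by
  set P := srCov hsr O with hP
  set P2 := srCov hsr P with hP2
  obtain ⟨a, ha⟩ := QuotientAddGroup.mk_surjective (u P2)
  obtain ⟨c, hc⟩ := QuotientAddGroup.mk_surjective (u O)
  have htrans : Refines P2.1 O.1 := refines_trans (srCov_ref hsr P) (srCov_ref hsr O)
  have hd : (a : DChain X (n + 1)) - c.1 ∈ fineBd O.1 n :=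
    hu P2 O htrans a c ha hc
  have M : vmap (fun x => ptMap (parMap hsr P x)) a.1 - vmap (fun x : X => x) a.1
      ∈ fineBd O.1 n := by
    refine corF _ _ _ _ a.2.2 ?_
    intro σ hσ
    obtain ⟨V, hV, hsub⟩ := a.2.1 σ hσ
    have hx0 : σ 0 ∈ V := hsub ⟨0, rfl⟩
    refine ⟨parMap hsr O (σ 0), parMap_mem hsr O (σ 0), fun j => ?_⟩
    have hj : σ j ∈ V := hsub ⟨j, rfl⟩
    obtain ⟨V1, hV1, hVV1⟩ := srCov_ref hsr P V hV
    have hV1W : V1 ⊆ parMap hsr O (σ 0) := parMap_sup hsr O (σ 0) V1 hV1 (hVV1 hx0)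
    constructor
    · exact hV1W (hVV1 hj)
    · have hVpar : V ⊆ parMap hsr P (σ j) := parMap_sup hsr P (σ j) V hV hj
      have hparW : parMap hsr P (σ j) ⊆ parMap hsr O (σ 0) :=
        parMap_sup hsr O (σ 0) _ (parMap_mem hsr P (σ j)) (hVpar hx0)
      exact hparW (ptMap_mem ⟨σ 0, hVpar hx0⟩)
  rw [← ha, ← hc]
  rw [PNhom_mk, NFhom_mk]
  refine fine_mk_eq ?_
  have e1 : vmap (ptMap (X := X)) (vmap (parMap hsr P) a.1) =
      vmap (fun x => ptMap (parMap hsr P x)) a.1 := vmap_vmap _ _ _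
  show vmap (ptMap (X := X)) (vmap (parMap hsr P) a.1) - c.1 ∈ fineBd O.1 n
  rw [e1]
  have e2 : vmap (fun x : X => x) a.1 = a.1 := vmap_id _
  have key : vmap (fun x => ptMap (parMap hsr P x)) a.1 - c.1 =
      (vmap (fun x => ptMap (parMap hsr P x)) a.1 - vmap (fun x : X => x) a.1)
      + ((a : DChain X (n + 1)) - c.1) := by rw [e2]; abel
  rw [key]
  exact add_mem M hd

end MainMaps
/-- If a topological space `X` is super-refinable, then in every degree
`n` its Čech homology `Ȟ_n(X,ℤ)` is isomorphic to its discrete homology `𝓗_n(X)`. -/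
theorem cechHomology_iso_discreteHomology {X : Type*} [TopologicalSpace X]
    (hsr : SuperRefinable X) (n : ℕ) :
    Nonempty ((cechHomology X n) ≃+ (discreteHomology X n)) := by
  rcases isEmpty_or_nonempty X with hX | hX
  · -- the empty space: both groups are trivial
    haveI h1 : ∀ O : Cov X, Subsingleton (nerveH O.1 n) := by
      intro O
      haveI : Subsingleton ↥(nerveCyc O.1 n) := by
        constructor
        rintro x y
        have hz : ∀ z : DChain (Set X) (n + 1), z ∈ nerveCyc O.1 n → z = 0 := by
          intro z hz
          rw [← Finsupp.support_eq_empty, Finset.eq_empty_iff_forall_notMem]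
          intro σ hσ
          obtain ⟨pt, -⟩ := (hz.1 σ hσ).2
          exact (IsEmpty.false pt)
        exact Subtype.ext ((hz x.1 x.2).trans (hz y.1 y.2).symm)
      constructor
      intro a b
      obtain ⟨x, rfl⟩ := QuotientAddGroup.mk_surjective a
      obtain ⟨y, rfl⟩ := QuotientAddGroup.mk_surjective b
      exact congrArg _ (Subsingleton.elim x y)
    haveI h2 : ∀ O : Cov X, Subsingleton (discH O.1 n) := by
      intro O
      haveI : Subsingleton (DChain X (n + 1)) := by
        constructor
        intro a b
        ext σ
        exact (IsEmpty.false (σ 0)).elim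
      haveI : Subsingleton ↥(fineCyc O.1 n) := by
        constructor
        intro x y
        exact Subtype.ext (Subsingleton.elim _ _)
      constructor
      intro a b
      obtain ⟨x, rfl⟩ := QuotientAddGroup.mk_surjective a
      obtain ⟨y, rfl⟩ := QuotientAddGroup.mk_surjective b
      exact congrArg _ (Subsingleton.elim x y)
    haveI : Subsingleton (∀ O : Cov X, nerveH O.1 n) := inferInstance
    haveI : Subsingleton (∀ O : Cov X, discH O.1 n) := inferInstance
    haveI : Subsingleton ↥(cechHomology X n) := inferInstance
    haveI : Subsingleton ↥(discreteHomology X n) := inferInstance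
    exact ⟨{ toFun := fun _ => 0, invFun := fun _ => 0,
             left_inv := fun a => Subsingleton.elim _ _,
             right_inv := fun a => Subsingleton.elim _ _,
             map_add' := fun a b => Subsingleton.elim _ _ }⟩
  · -- the main case
    refine ⟨AddEquiv.mk' (Equiv.mk
        (fun s => ⟨fun O => NFhom hsr n O (s.1 (srCov hsr O)), Phi_mem hsr n s.1 s.2⟩)
        (fun t => ⟨fun O => PNhom hsr n O (t.1 (srCov hsr O)), Psi_mem hsr n t.1 t.2⟩)
        ?_ ?_) ?_⟩
    · intro s
      apply Subtype.ext
      funext O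
      exact PsiPhi hsr n s.1 s.2 O
    · intro t
      apply Subtype.ext
      funext O
      exact PhiPsi hsr n t.1 t.2 O
    · intro x y
      apply Subtype.ext
      funext O
      show NFhom hsr n O ((x.1 + y.1) (srCov hsr O)) = _
      rw [Pi.add_apply, map_add]
      rfl
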